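/- Let Γ be a connected oriented graph and M ≥ 1 (or M = ∞). Then all connected components of the tensor product Γ ⊗ C_M are isomorphic as oriented graphs, where C_M is the oriented cycle of length M (or the oriented bi-infinite line when M = ∞). -/

import Mathlib

/-- An oriented (multi)graph à la Serre: vertices, edges, initial and terminal maps. -/
structure OGraph where
  V : Type
  E : Type
  ι : E → V
  τ : E → V

namespace OGraph

/-- Tensor product of oriented graphs. -/
def tensor (G H : OGraph) : OGraph where
  V := G.V × H.V
  E := G.E × H.E
  ι e := (G.ι e.1, H.ι e.2)
  τ e := (G.τ e.1, H.τ e.2)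

/-- Isomorphism of oriented graphs. -/
structure Iso (G H : OGraph) where
  fV : G.V ≃ H.V
  fE : G.E ≃ H.E
  hι : ∀ e, H.ι (fE e) = fV (G.ι e)
  hτ : ∀ e, H.τ (fE e) = fV (G.τ e)

/-- Weak adjacency: `u` and `v` are joined by an edge in some direction. -/
def Adj (G : OGraph) (u v : G.V) : Prop :=
  (∃ e, G.ι e = u ∧ G.τ e = v) ∨ (∃ e, G.ι e = v ∧ G.τ e = u)

/-- Weak reachability. -/
def Reach (G : OGraph) : G.V → G.V → Prop := Relation.ReflTransGen G.Adj

/-- Weak connectedness. -/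
def Connected (G : OGraph) : Prop := ∀ u v, G.Reach u v

/-- The connected component of a vertex, as an oriented graph. -/
def component (G : OGraph) (v : G.V) : OGraph where
  V := {w // G.Reach v w}
  E := {e // G.Reach v (G.ι e)}
  ι e := ⟨G.ι e.1, e.2⟩
  τ e := ⟨G.τ e.1, e.2.tail (Or.inl ⟨e.1, rfl, rfl⟩)⟩

/-- Paths in the underlying non-oriented graph, indexed by their signature:
`true` = an edge traversed positively, `false` = an edge traversed negatively. -/
inductive SPath (G : OGraph) : List Bool → G.V → G.V → Type
  | nil (v : G.V) : SPath G [] v v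
  | fwd {σ : List Bool} {z : G.V} (e : G.E) (p : SPath G σ (G.τ e) z) :
      SPath G (true :: σ) (G.ι e) z
  | bwd {σ : List Bool} {z : G.V} (e : G.E) (p : SPath G σ (G.ι e) z) :
      SPath G (false :: σ) (G.τ e) z

end OGraph

/-- Derangement of a signature: number of positive steps minus number of negative steps. -/
def der (σ : List Bool) : ℤ := (σ.count true : ℤ) - (σ.count false : ℤ)

/-- The oriented cycle of length `M` (for `M = 0`, `ZMod 0 = ℤ` and this is the
oriented bi-infinite line, corresponding to `M = ∞`). -/
@[reducible] def cycle (M : ℕ) : OGraph where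
  V := ZMod M
  E := ZMod M
  ι i := i
  τ i := i + 1

namespace OGraph
theorem adj_symm (G : OGraph) : Symmetric G.Adj := fun _ _ h => h.symm
theorem reach_symm (G : OGraph) : Symmetric G.Reach :=
  haveI : Std.Symm G.Adj := ⟨G.adj_symm⟩
  fun a b h => Std.Symm.symm (r := Relation.ReflTransGen G.Adj) a b h

def Iso.symm' {G H : OGraph} (f : Iso G H) : Iso H G where
  fV := f.fV.symm
  fE := f.fE.symm
  hι e := by rw [Equiv.eq_symm_apply, ← f.hι, Equiv.apply_symm_apply]
  hτ e := by rw [Equiv.eq_symm_apply, ← f.hτ, Equiv.apply_symm_apply]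

theorem Iso.reachMap {G H : OGraph} (f : Iso G H) {u w : G.V} (h : G.Reach u w) :
    H.Reach (f.fV u) (f.fV w) :=
  Relation.ReflTransGen.lift (r := G.Adj) f.fV (fun a b hab => by
    rcases hab with ⟨e, he1, he2⟩ | ⟨e, he1, he2⟩
    · exact Or.inl ⟨f.fE e, by rw [f.hι, he1], by rw [f.hτ, he2]⟩
    · exact Or.inr ⟨f.fE e, by rw [f.hι, he1], by rw [f.hτ, he2]⟩) _ _ h

theorem Iso.reach_iff {G H : OGraph} (f : Iso G H) (u w : G.V) :
    H.Reach (f.fV u) (f.fV w) ↔ G.Reach u w :=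
  ⟨fun h => by simpa [Iso.symm'] using f.symm'.reachMap h, f.reachMap⟩

def Iso.componentIso {G H : OGraph} (f : Iso G H) (v : G.V) :
    Iso (G.component v) (H.component (f.fV v)) where
  fV := f.fV.subtypeEquiv (fun w => (f.reach_iff v w).symm)
  fE := f.fE.subtypeEquiv (fun e => by rw [f.hι e]; exact (f.reach_iff v (G.ι e)).symm)
  hι e := Subtype.ext (f.hι e.1)
  hτ e := Subtype.ext (f.hτ e.1)

def componentReachIso (G : OGraph) {p q : G.V} (h : G.Reach p q) :
    Iso (G.component p) (G.component q) where
  fV := Equiv.subtypeEquivRight (fun w =>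
    ⟨fun hp => ((G.reach_symm h).trans hp), fun hq => h.trans hq⟩)
  fE := Equiv.subtypeEquivRight (fun e =>
    ⟨fun hp => ((G.reach_symm h).trans hp), fun hq => h.trans hq⟩)
  hι e := Subtype.ext rfl
  hτ e := Subtype.ext rfl

def Iso.trans' {G H K : OGraph} (f : Iso G H) (g : Iso H K) : Iso G K where
  fV := f.fV.trans g.fV
  fE := f.fE.trans g.fE
  hι e := by simp [g.hι, f.hι]
  hτ e := by simp [g.hτ, f.hτ]

def rot (G : OGraph) (M : ℕ) (c : ZMod M) : Iso (G.tensor (cycle M)) (G.tensor (cycle M)) where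
  fV := (Equiv.refl G.V).prodCongr (Equiv.addRight c)
  fE := (Equiv.refl G.E).prodCongr (Equiv.addRight c)
  hι e := rfl
  hτ e := Prod.ext rfl (add_right_comm _ _ _)

theorem tensor_reach (G : OGraph) (M : ℕ) {v w : G.V} (h : G.Reach v w) (i : ZMod M) :
    ∃ d, (G.tensor (cycle M)).Reach (v, i) (w, d) := by
  induction h with
  | refl => exact ⟨i, Relation.ReflTransGen.refl⟩
  | tail _ hbc ih =>
    obtain ⟨d, hd⟩ := ih
    rcases hbc with ⟨e, he1, he2⟩ | ⟨e, he1, he2⟩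
    · exact ⟨d + 1, hd.tail (Or.inl ⟨(e, d), Prod.ext he1 rfl, Prod.ext he2 rfl⟩)⟩
    · exact ⟨d - 1, hd.tail (Or.inr ⟨(e, d - 1), Prod.ext he1 rfl,
        Prod.ext he2 (sub_add_cancel d 1)⟩)⟩

end OGraph


/-- If `Γ` is a connected oriented graph and `C_M` is the oriented
cycle of length `M` (the oriented line `ℤ` when `M = 0`, encoding `M = ∞`), then all
connected components of `Γ ⊗ C_M` are isomorphic as oriented graphs. -/
theorem components_of_tensor_cycle_iso (G : OGraph) (hG : G.Connected) (M : ℕ)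
    (p q : (G.tensor (cycle M)).V) :
    Nonempty (OGraph.Iso ((G.tensor (cycle M)).component p) ((G.tensor (cycle M)).component q)) := by
  obtain ⟨v, i⟩ := p
  obtain ⟨w, j⟩ := q
  obtain ⟨d, hd⟩ := OGraph.tensor_reach G M (hG v w) i
  have i1 := OGraph.componentReachIso _ hd
  have i2 := (OGraph.rot G M (j - d)).componentIso (w, d)
  have hwd : (OGraph.rot G M (j - d)).fV (w, d) = (w, j) :=
    Prod.ext rfl (show d + (j - d) = j by rw [add_comm, sub_add_cancel])
  rw [hwd] at i2
  exact ⟨i1.trans' i2⟩
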